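/- Let n, m ∈ ℕ with m ≥ 64n and n ≥ 1. Let f(x) = √x on [0,1], let (Be_m f)(x) = ∑_{k=0}^{m} f(k/m)·C(m,k)·x^k·(1−x)^{m−k} be its m-th Bernstein polynomial, and define the univariate polynomial B_m(x) = √n·(Be_m f)(x/n). Then: (1) 0 ≤ B_m(y) ≤ √y for all y ∈ [0, n]; (2) B_m is monotone nondecreasing on [0, n], i.e., B_m(x) ≤ B_m(y) for 0 ≤ x ≤ y ≤ n; (3) B_m(y) ≥ √y/2 for all y ∈ [1/4, n]; (4) B_m(y) ≥ y/2 for all y ∈ [0, 1]. -/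

import Mathlib

open Finset

/-! ### Auxiliary development -/

/-- Bernstein weight `C(m,k) x^k (1-x)^(m-k)`. -/
noncomputable def Bw (m k : ℕ) (x : ℝ) : ℝ := (m.choose k : ℝ) * x^k * (1-x)^(m-k)

lemma Bw_nonneg {m k : ℕ} {x : ℝ} (hx : 0 ≤ x) (hx1 : x ≤ 1) : 0 ≤ Bw m k x :=
  mul_nonneg (mul_nonneg (Nat.cast_nonneg _) (pow_nonneg hx _)) (pow_nonneg (by linarith) _)

lemma cast_mul_pred (a : ℕ) : (a:ℝ) * ((a-1 : ℕ):ℝ) = (a:ℝ)^2 - (a:ℝ) := by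
  cases a with
  | zero => simp
  | succ b => push_cast [Nat.succ_sub_one]; ring

lemma sum_Bw (m : ℕ) (x : ℝ) : ∑ k ∈ range (m+1), Bw m k x = 1 := by
  have h := congrArg (Polynomial.eval x) (bernsteinPolynomial.sum ℝ m)
  simpa [Polynomial.eval_finset_sum, bernsteinPolynomial, Bw] using h

lemma sum_k_Bw (m : ℕ) (x : ℝ) : ∑ k ∈ range (m+1), (k:ℝ) * Bw m k x = m * x := by
  have h := congrArg (Polynomial.eval x) (bernsteinPolynomial.sum_smul ℝ m)
  simpa [Polynomial.eval_finset_sum, bernsteinPolynomial, Bw, mul_assoc] using h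

lemma sum_k2_Bw (m : ℕ) (x : ℝ) :
    ∑ k ∈ range (m+1), (k:ℝ)^2 * Bw m k x = ((m:ℝ)^2 - m)*x^2 + m * x := by
  have h := congrArg (Polynomial.eval x) (bernsteinPolynomial.sum_mul_smul ℝ m)
  simp [Polynomial.eval_finset_sum, bernsteinPolynomial, mul_assoc] at h
  have e : ∀ k ∈ range (m+1), (k:ℝ)^2 * Bw m k x
      = (k:ℝ) * ((k-1:ℕ) * ((m.choose k : ℕ) * (x ^ k * (1 - x) ^ (m - k)))) + (k:ℝ) * Bw m k x := by
    intro k _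
    have hc := cast_mul_pred k
    unfold Bw
    linear_combination -((m.choose k : ℝ) * (x ^ k * (1 - x) ^ (m - k))) * hc
  rw [Finset.sum_congr rfl e, Finset.sum_add_distrib, h, sum_k_Bw]
  have hc := cast_mul_pred m
  linear_combination x^2 * hc

/-- The Bernstein approximation to `√·` on `[0,1]`. -/
noncomputable def Sb (m : ℕ) (x : ℝ) : ℝ :=
  ∑ k ∈ range (m+1), Real.sqrt ((k : ℝ) / m) * (Nat.choose m k : ℝ) * x^k * (1 - x)^(m-k)

lemma Sb_eq (m : ℕ) (x : ℝ) :
    Sb m x = ∑ k ∈ range (m+1), Real.sqrt ((k : ℝ) / m) * Bw m k x := by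
  unfold Sb Bw
  exact Finset.sum_congr rfl fun k _ => by ring

lemma Sb_nonneg (m : ℕ) {x : ℝ} (hx : 0 ≤ x) (hx1 : x ≤ 1) : 0 ≤ Sb m x := by
  rw [Sb_eq]
  exact Finset.sum_nonneg fun k _ =>
    mul_nonneg (Real.sqrt_nonneg _) (Bw_nonneg hx hx1)

noncomputable def Db (m : ℕ) (x : ℝ) : ℝ :=
  ∑ j ∈ range m, (Real.sqrt (((j:ℝ)+1) / m) - Real.sqrt ((j:ℝ) / m)) *
    ((m : ℝ) * ((m-1).choose j : ℝ)) * (x^j * (1-x)^(m-1-j))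

lemma hasDerivAt_Sb (m : ℕ) (hm : 1 ≤ m) (x : ℝ) : HasDerivAt (Sb m) (Db m x) x := by
  have key : ∀ k ∈ range (m+1),
      HasDerivAt (fun x : ℝ => Real.sqrt ((k : ℝ) / m) * (Nat.choose m k : ℝ) * x^k * (1 - x)^(m-k))
        (Real.sqrt ((k : ℝ) / m) * (Nat.choose m k : ℝ) *
          ((k * x^(k-1)) * (1-x)^(m-k) - x^k * ((m-k) * (1-x)^(m-k-1)))) x := by
    intro k hk
    have hkm : ((m-k:ℕ):ℝ) = (m:ℝ) - (k:ℝ) :=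
      Nat.cast_sub (Finset.mem_range_succ_iff.mp hk)
    have h1 : HasDerivAt (fun x : ℝ => x^k) ((k:ℝ) * x^(k-1)) x := hasDerivAt_pow k x
    have h2 : HasDerivAt (fun x : ℝ => 1 - x) (-1) x := (hasDerivAt_id x).const_sub 1
    have h3 := h2.pow (m-k)
    have h4 := (h1.mul h3).const_mul (Real.sqrt ((k : ℝ) / m) * (Nat.choose m k : ℝ))
    convert h4 using 1
    · rfl
    · rfl
    · funext y; simp only [Pi.mul_apply, Pi.pow_apply]; ring
    · rw [hkm]; simp only [Pi.pow_apply]; ring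
  have hsum := HasDerivAt.fun_sum key
  rw [show Sb m = (fun x => ∑ k ∈ range (m+1),
      Real.sqrt ((k : ℝ) / m) * (Nat.choose m k : ℝ) * x^k * (1 - x)^(m-k)) from rfl]
  refine hsum.congr_deriv ?_
  calc ∑ k ∈ range (m+1), Real.sqrt ((k : ℝ) / m) * (Nat.choose m k : ℝ) *
          ((k * x^(k-1)) * (1-x)^(m-k) - x^k * ((m-k) * (1-x)^(m-k-1)))
      = ∑ k ∈ range (m+1),
          (Real.sqrt ((k : ℝ) / m) * (Nat.choose m k : ℝ) * ((k * x^(k-1)) * (1-x)^(m-k))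
           - Real.sqrt ((k : ℝ) / m) * (Nat.choose m k : ℝ) * (x^k * ((m-k) * (1-x)^(m-k-1)))) := by
        apply Finset.sum_congr rfl; intro k _; ring
    _ = (∑ k ∈ range (m+1), Real.sqrt ((k : ℝ) / m) * (Nat.choose m k : ℝ) * ((k * x^(k-1)) * (1-x)^(m-k)))
        - ∑ k ∈ range (m+1), Real.sqrt ((k : ℝ) / m) * (Nat.choose m k : ℝ) * (x^k * ((m-k) * (1-x)^(m-k-1))) := by
        rw [Finset.sum_sub_distrib]
    _ = (∑ j ∈ range m, Real.sqrt (((j+1 : ℕ) : ℝ) / m) * (Nat.choose m (j+1) : ℝ) *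
            (((j+1 : ℕ) : ℝ) * x^j * (1-x)^(m-(j+1))))
        - ∑ j ∈ range m, Real.sqrt ((j : ℝ) / m) * (Nat.choose m j : ℝ) * (x^j * ((m-j) * (1-x)^(m-j-1))) := by
        rw [Finset.sum_range_succ' _ m, Finset.sum_range_succ _ m]
        simp
    _ = Db m x := by
        unfold Db
        rw [← Finset.sum_sub_distrib]
        apply Finset.sum_congr rfl
        intro j hj
        have hjm : j < m := Finset.mem_range.mp hj
        have he1 : m - (j+1) = m - 1 - j := by omega
        have he2 : m - j - 1 = m - 1 - j := by omega
        have h1n : (j+1) * m.choose (j+1) = m * (m-1).choose j := by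
          have h := Nat.add_one_mul_choose_eq (m-1) j
          rw [show m - 1 + 1 = m from by omega] at h
          rw [Nat.mul_comm]; exact h.symm
        have h2n : (m-j) * m.choose j = m * (m-1).choose j := by
          have h := Nat.choose_mul_succ_eq (m-1) j
          rw [show m - 1 + 1 = m from by omega] at h
          rw [Nat.mul_comm, Nat.mul_comm m, ← h]
        have e1 : ((j:ℝ)+1) * (Nat.choose m (j+1) : ℝ) = (m : ℝ) * ((m-1).choose j : ℝ) := by
          exact_mod_cast congrArg (Nat.cast : ℕ → ℝ) h1n
        have e2 : ((m:ℝ) - (j:ℝ)) * (Nat.choose m j : ℝ) = (m : ℝ) * ((m-1).choose j : ℝ) := by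
          rw [← Nat.cast_sub hjm.le]
          exact_mod_cast congrArg (Nat.cast : ℕ → ℝ) h2n
        rw [he1, he2]
        push_cast
        linear_combination (Real.sqrt (((j:ℝ)+1)/m) * (x^j*(1-x)^(m-1-j))) * e1
          - (Real.sqrt ((j:ℝ)/m) * (x^j*(1-x)^(m-1-j))) * e2

lemma Db_nonneg (m : ℕ) {x : ℝ} (hx : 0 ≤ x) (hx1 : x ≤ 1) : 0 ≤ Db m x := by
  apply Finset.sum_nonneg
  intro j _
  apply mul_nonneg (mul_nonneg _ _) (mul_nonneg (pow_nonneg hx _) (pow_nonneg (by linarith) _))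
  · have h : ((j:ℝ)/m) ≤ ((j:ℝ)+1)/m := by
      rcases Nat.eq_zero_or_pos m with h | h
      · simp [h]
      · have hm' : (0:ℝ) < m := by exact_mod_cast h
        gcongr
        linarith
    linarith [Real.sqrt_le_sqrt h]
  · positivity

lemma Sb_monotoneOn (m : ℕ) (hm : 1 ≤ m) : MonotoneOn (Sb m) (Set.Icc (0:ℝ) 1) := by
  apply monotoneOn_of_deriv_nonneg (convex_Icc 0 1)
  · exact (Differentiable.continuous fun x => (hasDerivAt_Sb m hm x).differentiableAt).continuousOn
  · exact (fun x _ => ((hasDerivAt_Sb m hm x).differentiableAt).differentiableWithinAt)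
  · intro x hx
    rw [interior_Icc, Set.mem_Ioo] at hx
    rw [(hasDerivAt_Sb m hm x).deriv]
    exact Db_nonneg m hx.1.le hx.2.le

lemma sum_km_Bw (m : ℕ) (hm : 1 ≤ m) (x : ℝ) :
    ∑ k ∈ range (m+1), ((k:ℝ)/m) * Bw m k x = x := by
  have hm0 : (m:ℝ) ≠ 0 := by positivity
  have e : ∀ k ∈ range (m+1), ((k:ℝ)/m) * Bw m k x = (1/(m:ℝ)) * ((k:ℝ) * Bw m k x) := by
    intro k _; ring
  rw [Finset.sum_congr rfl e, ← Finset.mul_sum, sum_k_Bw]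
  field_simp

lemma sum_km2_Bw (m : ℕ) (hm : 1 ≤ m) (x : ℝ) :
    ∑ k ∈ range (m+1), ((k:ℝ)/m)^2 * Bw m k x = x^2 + (x - x^2)/m := by
  have hm0 : (m:ℝ) ≠ 0 := by positivity
  have e : ∀ k ∈ range (m+1), ((k:ℝ)/m)^2 * Bw m k x = (1/(m:ℝ)^2) * ((k:ℝ)^2 * Bw m k x) := by
    intro k _; ring
  rw [Finset.sum_congr rfl e, ← Finset.mul_sum, sum_k2_Bw]
  field_simp
  ring

lemma Sb_le_sqrt (m : ℕ) (hm : 1 ≤ m) {x : ℝ} (hx : 0 ≤ x) (hx1 : x ≤ 1) :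
    Sb m x ≤ Real.sqrt x := by
  have hcs := Finset.sum_sq_le_sum_mul_sum_of_sq_eq_mul (range (m+1))
    (r := fun k => Real.sqrt ((k : ℝ) / m) * Bw m k x)
    (f := fun k => Bw m k x)
    (g := fun k => ((k:ℝ)/m) * Bw m k x)
    (fun k _ => Bw_nonneg hx hx1)
    (fun k _ => mul_nonneg (by positivity) (Bw_nonneg hx hx1))
    (fun k _ => by
      have hu : (Real.sqrt ((k:ℝ)/m))^2 = (k:ℝ)/m := Real.sq_sqrt (by positivity)
      linear_combination (Bw m k x)^2 * hu)
  rw [sum_Bw, sum_km_Bw m hm, one_mul, ← Sb_eq] at hcs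
  exact (Real.le_sqrt (Sb_nonneg m hx hx1) hx).mpr hcs

lemma ptwise (s r : ℝ) (hs : 0 ≤ s) (hr : 0 ≤ r) :
    2*(s^2)^2 + s^2*(r^2 - s^2) - (r^2 - s^2)^2 ≤ 2*s^3*r := by
  nlinarith [mul_nonneg (mul_nonneg hr (sq_nonneg (r-s))) (by linarith : (0:ℝ) ≤ r + 2*s)]

lemma Sb_ge_half_sqrt (m : ℕ) (hm : 1 ≤ m) {x : ℝ} (hx1 : x ≤ 1) (h16 : 1 ≤ (m:ℝ) * x) :
    Real.sqrt x / 2 ≤ Sb m x := by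
  have hm0 : (0:ℝ) < m := by exact_mod_cast hm
  have hxpos : 0 < x := by nlinarith
  set s := Real.sqrt x with hs_def
  have hs : 0 ≤ s := Real.sqrt_nonneg x
  have hs2 : s^2 = x := Real.sq_sqrt hxpos.le
  have hspos : 0 < s := Real.sqrt_pos.mpr hxpos
  have e : ∀ k ∈ range (m+1),
      (3*x/m)*((k:ℝ)*Bw m k x) - (1/(m:ℝ)^2)*((k:ℝ)^2*Bw m k x)
        ≤ 2*s^3*(Real.sqrt ((k:ℝ)/m) * Bw m k x) := by
    intro k _
    have hu : (Real.sqrt ((k:ℝ)/m))^2 = (k:ℝ)/m := Real.sq_sqrt (by positivity)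
    have hB : 0 ≤ Bw m k x := Bw_nonneg hxpos.le hx1
    have hp := ptwise s (Real.sqrt ((k:ℝ)/m)) hs (Real.sqrt_nonneg _)
    rw [hu, hs2] at hp
    have hid : (3*x/m)*((k:ℝ)*Bw m k x) - (1/(m:ℝ)^2)*((k:ℝ)^2*Bw m k x)
        = (2*x^2 + x*((k:ℝ)/m - x) - ((k:ℝ)/m - x)^2)*Bw m k x := by
      field_simp
      ring
    rw [hid]
    calc (2*x^2 + x*((k:ℝ)/m - x) - ((k:ℝ)/m - x)^2)*Bw m k x
        ≤ (2*s^3*Real.sqrt ((k:ℝ)/m))*Bw m k x := by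
          apply mul_le_mul_of_nonneg_right _ hB
          linarith
      _ = 2*s^3*(Real.sqrt ((k:ℝ)/m) * Bw m k x) := by ring
  have hsum := Finset.sum_le_sum e
  rw [Finset.sum_sub_distrib] at hsum
  rw [← Finset.mul_sum, ← Finset.mul_sum, ← Finset.mul_sum, sum_k_Bw, sum_k2_Bw, ← Sb_eq] at hsum
  -- hsum : (3x/m)(mx) - (1/m²)((m²-m)x²+mx) ≤ 2 s³ Sb
  have hval : (3*x/m)*((m:ℝ)*x) - (1/(m:ℝ)^2)*(((m:ℝ)^2 - m)*x^2 + m*x)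
      = 2*x^2 + (x^2 - x)/m := by
    field_simp
    ring
  rw [hval] at hsum
  -- since 1 ≤ m x : x ≤ m x², so (x - x²)/m ≤ x², so LHS ≥ x² = s⁴
  have hxx : x ≤ (m:ℝ) * x^2 := by nlinarith
  have hge : s^4 ≤ 2*s^3*Sb m x := by
    have h1 : (x^2 - x)/m ≥ (x^2 - (m:ℝ)*x^2)/m := by gcongr
    have h2 : (x^2 - (m:ℝ)*x^2)/m = x^2/m - x^2 := by field_simp
    have h3 : (0:ℝ) ≤ x^2/m := by positivity
    have hs4 : s^4 = x^2 := by rw [show s^4 = (s^2)^2 from by ring, hs2]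
    nlinarith
  nlinarith [mul_pos (mul_pos hspos hspos) hspos]

lemma Sb_ge_lin (n m : ℕ) (hm : 1 ≤ m) {x : ℝ} (hx : 0 ≤ x) (hx1 : x ≤ 1)
    (h64 : 64*(n:ℝ) ≤ m) (hn : 1 ≤ n) (hx4 : 4*(n:ℝ)*x ≤ 1) :
    Real.sqrt n * x / 2 ≤ Sb m x := by
  have hn0 : (0:ℝ) < n := by exact_mod_cast hn
  have hm0 : (0:ℝ) < m := by exact_mod_cast hm
  rcases eq_or_lt_of_le hx with h0 | hxpos
  · rw [← h0]
    simpa using Sb_nonneg m (le_refl (0:ℝ)) zero_le_one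
  have hSb : 0 ≤ Sb m x := Sb_nonneg m hx hx1
  set M32 : ℝ := ∑ k ∈ range (m+1), (Real.sqrt ((k:ℝ)/m))^3 * Bw m k x with hM32_def
  have hM32 : 0 ≤ M32 := Finset.sum_nonneg fun k _ =>
    mul_nonneg (by positivity) (Bw_nonneg hx hx1)
  have hA : x^2 ≤ Sb m x * M32 := by
    have hcs := Finset.sum_sq_le_sum_mul_sum_of_sq_eq_mul (range (m+1))
      (r := fun k => ((k:ℝ)/m) * Bw m k x)
      (f := fun k => Real.sqrt ((k:ℝ)/m) * Bw m k x)
      (g := fun k => (Real.sqrt ((k:ℝ)/m))^3 * Bw m k x)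
      (fun k _ => mul_nonneg (Real.sqrt_nonneg _) (Bw_nonneg hx hx1))
      (fun k _ => mul_nonneg (by positivity) (Bw_nonneg hx hx1))
      (fun k _ => by
        have hu : (Real.sqrt ((k:ℝ)/m))^2 = (k:ℝ)/m := Real.sq_sqrt (by positivity)
        linear_combination (-((Bw m k x)^2 * ((k:ℝ)/m + (Real.sqrt ((k:ℝ)/m))^2))) * hu)
    rw [sum_km_Bw m hm, ← Sb_eq] at hcs
    exact hcs
  have hB : M32^2 ≤ x * (x^2 + (x - x^2)/m) := by
    have hcs := Finset.sum_sq_le_sum_mul_sum_of_sq_eq_mul (range (m+1))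
      (r := fun k => (Real.sqrt ((k:ℝ)/m))^3 * Bw m k x)
      (f := fun k => ((k:ℝ)/m) * Bw m k x)
      (g := fun k => ((k:ℝ)/m)^2 * Bw m k x)
      (fun k _ => mul_nonneg (by positivity) (Bw_nonneg hx hx1))
      (fun k _ => mul_nonneg (by positivity) (Bw_nonneg hx hx1))
      (fun k _ => by
        have hu : (Real.sqrt ((k:ℝ)/m))^2 = (k:ℝ)/m := Real.sq_sqrt (by positivity)
        linear_combination ((Bw m k x)^2 * ((Real.sqrt ((k:ℝ)/m))^4
          + (Real.sqrt ((k:ℝ)/m))^2 * ((k:ℝ)/m) + ((k:ℝ)/m)^2)) * hu)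
    rw [sum_km_Bw m hm, sum_km2_Bw m hm] at hcs
    exact hcs
  -- combine
  have hA2 : x^4 ≤ (Sb m x)^2 * M32^2 := by
    calc x^4 = x^2 * x^2 := by ring
      _ ≤ (Sb m x * M32) * (Sb m x * M32) :=
          mul_le_mul hA hA (by positivity) (mul_nonneg hSb hM32)
      _ = (Sb m x)^2 * M32^2 := by ring
  have hA3 : x^4 ≤ (Sb m x)^2 * (x * (x^2 + (x - x^2)/m)) :=
    le_trans hA2 (mul_le_mul_of_nonneg_left hB (sq_nonneg _))
  have hM2b : (n:ℝ) * (x * (x^2 + (x - x^2)/m)) ≤ 4 * x^2 := by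
    have ha : (0:ℝ) ≤ x - x^2 := by nlinarith
    have hinv : (x - x^2)/(m:ℝ) ≤ (x - x^2)/(64*(n:ℝ)) :=
      div_le_div_of_nonneg_left ha (by positivity) h64
    have hstep : (n:ℝ) * (x * (x^2 + (x - x^2)/m)) ≤ (n:ℝ) * (x * (x^2 + (x - x^2)/(64*(n:ℝ)))) := by
      gcongr
    have heq : (n:ℝ) * (x * (x^2 + (x - x^2)/(64*(n:ℝ)))) = (n:ℝ)*x^3 + x*(x - x^2)/64 := by
      field_simp
    have h1 : (n:ℝ)*x^3 ≤ x^2/4 := by nlinarith [mul_le_mul_of_nonneg_right hx4 (sq_nonneg x)]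
    have h2 : x*(x - x^2) ≤ x^2 := by nlinarith
    rw [heq] at hstep
    linarith [sq_nonneg x]
  have hkey : (n:ℝ) * x^4 ≤ (Sb m x)^2 * (4 * x^2) := by
    calc (n:ℝ) * x^4 ≤ (n:ℝ) * ((Sb m x)^2 * (x * (x^2 + (x - x^2)/m))) := by
          apply mul_le_mul_of_nonneg_left hA3 hn0.le
      _ = (Sb m x)^2 * ((n:ℝ) * (x * (x^2 + (x - x^2)/m))) := by ring
      _ ≤ (Sb m x)^2 * (4 * x^2) := mul_le_mul_of_nonneg_left hM2b (sq_nonneg _)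
  have hnx : (n:ℝ) * x^2 ≤ 4 * (Sb m x)^2 := by
    have hx2 : (0:ℝ) < x^2 := by positivity
    have := le_of_mul_le_mul_right (by linarith [hkey] :
      ((n:ℝ) * x^2) * x^2 ≤ (4 * (Sb m x)^2) * x^2) hx2
    exact this
  have h1 : Real.sqrt ((n:ℝ)*x^2/4) ≤ Real.sqrt ((Sb m x)^2) :=
    Real.sqrt_le_sqrt (by linarith)
  rw [Real.sqrt_sq hSb] at h1
  have h2 : Real.sqrt ((n:ℝ)*x^2/4) = Real.sqrt n * x/2 := by
    rw [show (n:ℝ)*x^2/4 = (n:ℝ)*(x/2)^2 from by ring,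
      Real.sqrt_mul (Nat.cast_nonneg n), Real.sqrt_sq (by linarith)]
    ring
  linarith [h2 ▸ h1]

/-- The scaled Bernstein-polynomial proxy `B_m(x) = √n · (Be_m √·)(x/n)` for the
square-root function on `[0, n]`. -/
noncomputable def Bpoly (n m : ℕ) (x : ℝ) : ℝ :=
  Real.sqrt n * ∑ k ∈ Finset.range (m+1),
    Real.sqrt ((k : ℝ) / m) * (Nat.choose m k : ℝ) * (x/n)^k * (1 - x/n)^(m-k)

theorem bernstein_sqrt_proxy_properties
    (n m : ℕ) (hn : 1 ≤ n) (hm : 64 * n ≤ m) :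
    (∀ y : ℝ, 0 ≤ y → y ≤ n → 0 ≤ Bpoly n m y ∧ Bpoly n m y ≤ Real.sqrt y) ∧
    (∀ x y : ℝ, 0 ≤ x → x ≤ y → y ≤ n → Bpoly n m x ≤ Bpoly n m y) ∧
    (∀ y : ℝ, 1/4 ≤ y → y ≤ n → Real.sqrt y / 2 ≤ Bpoly n m y) ∧
    (∀ y : ℝ, 0 ≤ y → y ≤ 1 → y / 2 ≤ Bpoly n m y) := by
  have hn0 : (0:ℝ) < n := by exact_mod_cast hn
  have hne : (n:ℝ) ≠ 0 := hn0.ne'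
  have hm1 : 1 ≤ m := by omega
  have h64 : 64*(n:ℝ) ≤ (m:ℝ) := by exact_mod_cast hm
  have hn1 : (1:ℝ) ≤ (n:ℝ) := by exact_mod_cast hn
  have hBp : ∀ y : ℝ, Bpoly n m y = Real.sqrt n * Sb m (y/n) := fun y => rfl
  have hp1 : ∀ y : ℝ, 0 ≤ y → y ≤ n → 0 ≤ Bpoly n m y ∧ Bpoly n m y ≤ Real.sqrt y := by
    intro y hy hyn
    have hx : 0 ≤ y/n := div_nonneg hy hn0.le
    have hx1 : y/n ≤ 1 := by rw [div_le_one hn0]; exact hyn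
    constructor
    · rw [hBp]; exact mul_nonneg (Real.sqrt_nonneg _) (Sb_nonneg m hx hx1)
    · rw [hBp]
      calc Real.sqrt n * Sb m (y/n) ≤ Real.sqrt n * Real.sqrt (y/n) :=
            mul_le_mul_of_nonneg_left (Sb_le_sqrt m hm1 hx hx1) (Real.sqrt_nonneg _)
        _ = Real.sqrt ((n:ℝ) * (y/n)) := (Real.sqrt_mul (Nat.cast_nonneg n) _).symm
        _ = Real.sqrt y := by rw [show (n:ℝ) * (y/n) = y from by field_simp]
  have hp2 : ∀ x y : ℝ, 0 ≤ x → x ≤ y → y ≤ n → Bpoly n m x ≤ Bpoly n m y := by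
    intro x y hx hxy hyn
    rw [hBp, hBp]
    apply mul_le_mul_of_nonneg_left _ (Real.sqrt_nonneg _)
    exact Sb_monotoneOn m hm1
      ⟨div_nonneg hx hn0.le, by rw [div_le_one hn0]; linarith⟩
      ⟨div_nonneg (by linarith) hn0.le, by rw [div_le_one hn0]; exact hyn⟩
      (by gcongr)
  have hp3 : ∀ y : ℝ, 1/4 ≤ y → y ≤ n → Real.sqrt y / 2 ≤ Bpoly n m y := by
    intro y hy hyn
    have hy0 : (0:ℝ) ≤ y := by linarith
    have hx1 : y/n ≤ 1 := by rw [div_le_one hn0]; exact hyn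
    have h16 : 1 ≤ (m:ℝ) * (y/n) := by
      have e : 64*(n:ℝ)*(y/n) = 64*y := by field_simp
      have h := mul_le_mul_of_nonneg_right h64 (div_nonneg hy0 hn0.le)
      linarith
    have hS := Sb_ge_half_sqrt m hm1 hx1 h16
    rw [hBp]
    have hsy : Real.sqrt y = Real.sqrt n * Real.sqrt (y/n) := by
      rw [← Real.sqrt_mul (Nat.cast_nonneg n), show (n:ℝ) * (y/n) = y from by field_simp]
    rw [hsy]
    have := mul_le_mul_of_nonneg_left hS (Real.sqrt_nonneg (n:ℝ))
    linarith
  have hp4 : ∀ y : ℝ, 0 ≤ y → y ≤ 1 → y / 2 ≤ Bpoly n m y := by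
    intro y hy hy1
    rcases le_or_gt (1/4) y with h | h
    · have h3 := hp3 y h (by linarith)
      have hyle : y ≤ Real.sqrt y := (Real.le_sqrt hy hy).mpr (by nlinarith)
      linarith
    · have hx : 0 ≤ y/n := div_nonneg hy hn0.le
      have hx1 : y/n ≤ 1 := by rw [div_le_one hn0]; linarith
      have hx4 : 4*(n:ℝ)*(y/n) ≤ 1 := by
        rw [show 4*(n:ℝ)*(y/n) = 4*y from by field_simp]
        linarith
      have hS := Sb_ge_lin n m hm1 hx hx1 h64 hn hx4
      rw [hBp]
      have hss : Real.sqrt n * Real.sqrt n = (n:ℝ) := Real.mul_self_sqrt (Nat.cast_nonneg n)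
      have h2 := mul_le_mul_of_nonneg_left hS (Real.sqrt_nonneg (n:ℝ))
      have he : Real.sqrt n * (Real.sqrt n * (y/n) / 2) = y/2 := by
        rw [show Real.sqrt (n:ℝ) * (Real.sqrt (n:ℝ) * (y / (n:ℝ)) / 2)
            = (Real.sqrt (n:ℝ) * Real.sqrt (n:ℝ)) * (y/(n:ℝ)) / 2 from by ring, hss]
        field_simp
      linarith
  exact ⟨hp1, hp2, hp3, hp4⟩
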